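/- Let B be a small strict bicategory and let A be a function assigning to each 1-morphism of B a positive real number, multiplicative under composition of 1-morphisms: A(f ≫ g) = A(f)·A(g) for all composable 1-morphisms f, g. For t ∈ ℝ define σ_t : ℂ[B] → ℂ[B] by σ_t(F)(Φ) = (A(f)/A(g))^{it}·F(Φ) for a 2-morphism Φ : f ⟶ g. Then each σ_t is compatible with the horizontal convolution product: σ_t(F ∘ G) = σ_t(F) ∘ σ_t(G) for all F, G ∈ ℂ[B]. -/

import Mathlib

open CategoryTheory CategoryTheory.Bicategory

universe w v u

variable (B : Type u) [Bicategory.{w, v} B] [Bicategory.Strict B]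

/-- The set of all 1-morphisms of `B`, as a sigma type. -/
def OneMor : Type (max u v) := Σ a b : B, a ⟶ b

/-- The set of all 2-morphisms of a small strict bicategory `B`, as a sigma type. -/
def TwoMor : Type (max u v w) := Σ (a b : B) (f g : a ⟶ b), f ⟶ g

/-- The source 1-morphism of a 2-morphism. -/
def TwoMor.src (Φ : TwoMor B) : OneMor B := ⟨Φ.1, Φ.2.1, Φ.2.2.1⟩

/-- The target 1-morphism of a 2-morphism. -/
def TwoMor.tgt (Φ : TwoMor B) : OneMor B := ⟨Φ.1, Φ.2.1, Φ.2.2.2.1⟩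

/-- `HDecomp B Φ Ψ Ξ` means that `Φ` is the horizontal composition `Ψ ◫ Ξ`. -/
def HDecomp (Φ Ψ Ξ : TwoMor B) : Prop :=
  ∃ (a b c : B) (f g : a ⟶ b) (h k : b ⟶ c) (η : f ⟶ g) (θ : h ⟶ k),
    Ψ = ⟨a, b, f, g, η⟩ ∧ Ξ = ⟨b, c, h, k, θ⟩ ∧
      Φ = ⟨a, c, f ≫ h, g ≫ k, (η ▷ h) ≫ (g ◁ θ)⟩

/-- The horizontal convolution product on `ℂ[B]`. -/
noncomputable def hconv (f g : TwoMor B → ℂ) : TwoMor B → ℂ :=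
  fun Φ => ∑ᶠ (p : TwoMor B × TwoMor B) (_ : HDecomp B Φ p.1 p.2), f p.1 * g p.2

/-- The flow `σ_t(F)(Φ) = (A(f)/A(g))^{it} · F(Φ)` for a 2-morphism `Φ : f ⟶ g`. -/
noncomputable def sigma (A : OneMor B → ℝ) (t : ℝ) (F : TwoMor B → ℂ) : TwoMor B → ℂ :=
  fun Φ => Complex.exp (Complex.I * t * Real.log (A Φ.src / A Φ.tgt)) * F Φ

/-- For `A` positive and multiplicative under composition of 1-morphisms, the maps
`σ_t(F)(Φ) = (A(f)/A(g))^{it}·F(Φ)` (for `Φ : f ⟶ g`) are compatible with the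
horizontal convolution product on `ℂ[B]`. -/
theorem sigma_horizontal_compatible (A : OneMor B → ℝ) (hpos : ∀ f, 0 < A f)
    (hmul : ∀ (a b c : B) (u : a ⟶ b) (v : b ⟶ c),
      A ⟨a, c, u ≫ v⟩ = A ⟨a, b, u⟩ * A ⟨b, c, v⟩) :
    ∀ (t : ℝ) (F G : TwoMor B → ℂ),
      (Function.support F).Finite → (Function.support G).Finite →
      sigma B A t (hconv B F G) = hconv B (sigma B A t F) (sigma B A t G) := by
  intro t F G hF hG
  classical
  funext Φ
  simp only [sigma, hconv]
  have hsupp : (Function.support fun p : TwoMor B × TwoMor B =>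
      ∑ᶠ _ : HDecomp B Φ p.1 p.2, F p.1 * G p.2).Finite := by
    apply Set.Finite.subset (hF.prod hG)
    intro p hp
    simp only [Function.mem_support] at hp
    rw [finsum_eq_if] at hp
    split_ifs at hp
    · exact ⟨fun h => hp (by rw [h, zero_mul]), fun h => hp (by rw [h, mul_zero])⟩
    · exact absurd rfl hp
  rw [mul_finsum _ _]
  apply finsum_congr
  intro p
  rw [finsum_eq_if, finsum_eq_if]
  split_ifs with hP
  · obtain ⟨a, b, c, f, g, h, k, η, θ, hΨ, hΞ, hΦ⟩ := hP
    subst hΦ; rw [hΨ, hΞ]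
    simp only [TwoMor.src, TwoMor.tgt]
    rw [hmul, hmul]
    have h1 : Real.log (A ⟨a, b, f⟩ * A ⟨b, c, h⟩ / (A ⟨a, b, g⟩ * A ⟨b, c, k⟩))
        = Real.log (A ⟨a, b, f⟩ / A ⟨a, b, g⟩) + Real.log (A ⟨b, c, h⟩ / A ⟨b, c, k⟩) := by
      rw [← div_mul_div_comm]; exact Real.log_mul (div_pos (hpos _) (hpos _)).ne'
        (div_pos (hpos _) (hpos _)).ne'
    rw [h1]
    push_cast
    rw [mul_add, Complex.exp_add]
    ring
  · rw [mul_zero]
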